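/- Consider an HMM with diagonal interactions on ℂ^{d_E} ⊗ ℂ^{d_P}: H_E = Σᵢ hᵢ Eᵢᵢ with hᵢ ∈ ℝ, H_EP = Σᵢ Eᵢᵢ ⊗ Hᵢ with each Hᵢ a Hermitian d_P×d_P matrix, jump operators L_k = Σᵢ Eᵢᵢ ⊗ M_{k,i} for k = 1,…,r, a Hermitian d_P×d_P matrix G, and ω ∈ ℝ. Let ℒ(ρ) = −i[H_EP + ω(I_{d_E} ⊗ G) + ω(H_E ⊗ I_{d_P}), ρ] + Σ_k (L_k ρ L_k† − (1/2){L_k†L_k, ρ}) be the full Lindbladian and ℒ̂(ρ) = −i[H_EP + ω(I_{d_E} ⊗ G), ρ] + Σ_k (L_k ρ L_k† − (1/2){L_k†L_k, ρ}) the Lindbladian with the environment-signal term ω(H_E ⊗ I_{d_P}) omitted. Then for every environment-diagonal matrix ρ = Σᵢ Eᵢᵢ ⊗ Xᵢ (Xᵢ arbitrary d_P×d_P complex matrices) and every t ∈ ℝ: Tr_E(exp(t·ℒ)(ρ)) = Tr_E(exp(t·ℒ̂)(ρ)). -/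

import Mathlib

open scoped BigOperators
open Matrix

/-- Kronecker product of two matrices (environment factor first). -/
def kron {n₁ m₁ n₂ m₂ : Type*} (A : Matrix n₁ m₁ ℂ) (B : Matrix n₂ m₂ ℂ) :
    Matrix (n₁ × n₂) (m₁ × m₂) ℂ :=
  Matrix.of fun p q => A p.1 q.1 * B p.2 q.2

/-- The diagonal matrix unit `Eᵢᵢ = eᵢeᵢ†`. -/
def Eii {dE : ℕ} (i : Fin dE) : Matrix (Fin dE) (Fin dE) ℂ :=
  Matrix.single i i 1

/-- Partial trace over the environment:
`Tr_E(M) = Σᵢ (eᵢ† ⊗ I) M (eᵢ ⊗ I)`. -/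
noncomputable def TrE {dE dP : ℕ} (M : Matrix (Fin dE × Fin dP) (Fin dE × Fin dP) ℂ) :
    Matrix (Fin dP) (Fin dP) ℂ :=
  ∑ i : Fin dE, Matrix.of fun p q => M (i, p) (i, q)

/-- The exponential `exp(L)` of an endomorphism of the matrix space, applied to `ρ`,
via its power series. -/
noncomputable def expApply {dE dP : ℕ}
    (L : Module.End ℂ (Matrix (Fin dE × Fin dP) (Fin dE × Fin dP) ℂ))
    (ρ : Matrix (Fin dE × Fin dP) (Fin dE × Fin dP) ℂ) :
    Matrix (Fin dE × Fin dP) (Fin dE × Fin dP) ℂ :=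
  ∑' n : ℕ, ((n.factorial : ℂ)⁻¹) • ((L ^ n) ρ)

/-- A matrix on the product space is environment-diagonal if its off-diagonal
environment blocks vanish. -/
def EnvDiag {dE dP : ℕ} (M : Matrix (Fin dE × Fin dP) (Fin dE × Fin dP) ℂ) : Prop :=
  ∀ i j p q, i ≠ j → M (i, p) (j, q) = 0

lemma envDiag_kron {dE dP : ℕ} {A : Matrix (Fin dE) (Fin dE) ℂ}
    (B : Matrix (Fin dP) (Fin dP) ℂ) (hA : ∀ i j, i ≠ j → A i j = 0) :
    EnvDiag (kron A B) := fun i j p q hij => by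
  simp [kron, hA i j hij]

lemma EnvDiag.add {dE dP : ℕ} {M N : Matrix (Fin dE × Fin dP) (Fin dE × Fin dP) ℂ}
    (hM : EnvDiag M) (hN : EnvDiag N) : EnvDiag (M + N) := fun i j p q hij => by
  simp [Matrix.add_apply, hM i j p q hij, hN i j p q hij]

lemma EnvDiag.sub {dE dP : ℕ} {M N : Matrix (Fin dE × Fin dP) (Fin dE × Fin dP) ℂ}
    (hM : EnvDiag M) (hN : EnvDiag N) : EnvDiag (M - N) := fun i j p q hij => by
  simp [Matrix.sub_apply, hM i j p q hij, hN i j p q hij]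

lemma EnvDiag.smul {dE dP : ℕ} (c : ℂ) {M : Matrix (Fin dE × Fin dP) (Fin dE × Fin dP) ℂ}
    (hM : EnvDiag M) : EnvDiag (c • M) := fun i j p q hij => by
  simp [Matrix.smul_apply, hM i j p q hij]

lemma envDiag_sum {dE dP : ℕ} {α : Type*} (s : Finset α)
    (f : α → Matrix (Fin dE × Fin dP) (Fin dE × Fin dP) ℂ)
    (hf : ∀ a ∈ s, EnvDiag (f a)) : EnvDiag (∑ a ∈ s, f a) := fun i j p q hij => by
  rw [Matrix.sum_apply]
  exact Finset.sum_eq_zero fun a ha => hf a ha i j p q hij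

lemma EnvDiag.mul {dE dP : ℕ} {M N : Matrix (Fin dE × Fin dP) (Fin dE × Fin dP) ℂ}
    (hM : EnvDiag M) (hN : EnvDiag N) : EnvDiag (M * N) := fun i j p q hij => by
  rw [Matrix.mul_apply]
  apply Finset.sum_eq_zero
  rintro ⟨k, s⟩ _
  by_cases hk : k = i
  · subst hk; rw [hN _ _ _ _ hij, mul_zero]
  · rw [hM _ _ _ _ (fun hh => hk hh.symm), zero_mul]

lemma EnvDiag.conjTranspose {dE dP : ℕ}
    {M : Matrix (Fin dE × Fin dP) (Fin dE × Fin dP) ℂ} (hM : EnvDiag M) :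
    EnvDiag Mᴴ := fun i j p q hij => by
  simp [Matrix.conjTranspose_apply, hM j i q p (Ne.symm hij)]

lemma kron_diag_comm {dE dP : ℕ} (d : Fin dE → ℂ)
    {M : Matrix (Fin dE × Fin dP) (Fin dE × Fin dP) ℂ} (hM : EnvDiag M) :
    kron (Matrix.diagonal d) (1 : Matrix (Fin dP) (Fin dP) ℂ) * M
      = M * kron (Matrix.diagonal d) (1 : Matrix (Fin dP) (Fin dP) ℂ) := by
  have hd : kron (Matrix.diagonal d) (1 : Matrix (Fin dP) (Fin dP) ℂ)
      = Matrix.diagonal (fun ip : Fin dE × Fin dP => d ip.1) := by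
    ext ⟨i, p⟩ ⟨j, q⟩
    simp only [kron, Matrix.of_apply, Matrix.diagonal_apply, Matrix.one_apply, Prod.mk.injEq]
    by_cases hij : i = j <;> by_cases hpq : p = q <;> simp [hij, hpq]
  rw [hd]
  ext ⟨i, p⟩ ⟨j, q⟩
  rw [Matrix.diagonal_mul, Matrix.mul_diagonal]
  by_cases hij : i = j
  · simp [hij, mul_comm]
  · simp [hM i j p q hij]

/-- For an HMM with diagonal interactions and an environment-diagonal
initial state `ρ = Σᵢ Eᵢᵢ ⊗ Xᵢ`, the environment-signal term `ω(H_E ⊗ I)` may be dropped: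
`Tr_E(exp(tℒ)(ρ)) = Tr_E(exp(tℒ̂)(ρ))` for all `t`. -/
theorem stmt12 (dE dP : ℕ) (h : Fin dE → ℝ)
    (Hp : Fin dE → Matrix (Fin dP) (Fin dP) ℂ) (hHp : ∀ i, (Hp i).IsHermitian)
    (r : ℕ) (Mk : Fin r → Fin dE → Matrix (Fin dP) (Fin dP) ℂ)
    (G : Matrix (Fin dP) (Fin dP) ℂ) (hG : G.IsHermitian) (ω : ℝ)
    (HE : Matrix (Fin dE) (Fin dE) ℂ) (hHE : HE = Matrix.diagonal fun i => (h i : ℂ))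
    (HEP : Matrix (Fin dE × Fin dP) (Fin dE × Fin dP) ℂ)
    (hHEP : HEP = ∑ i, kron (Eii i) (Hp i))
    (Lop : Fin r → Matrix (Fin dE × Fin dP) (Fin dE × Fin dP) ℂ)
    (hLop : ∀ k, Lop k = ∑ i, kron (Eii i) (Mk k i))
    (ℒ : Module.End ℂ (Matrix (Fin dE × Fin dP) (Fin dE × Fin dP) ℂ))
    (hℒ : ∀ ρ, ℒ ρ =
      -(Complex.I) • ((HEP + (ω : ℂ) • kron (1 : Matrix (Fin dE) (Fin dE) ℂ) G
            + (ω : ℂ) • kron HE (1 : Matrix (Fin dP) (Fin dP) ℂ)) * ρ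
          - ρ * (HEP + (ω : ℂ) • kron (1 : Matrix (Fin dE) (Fin dE) ℂ) G
            + (ω : ℂ) • kron HE (1 : Matrix (Fin dP) (Fin dP) ℂ)))
        + ∑ k, (Lop k * ρ * (Lop k)ᴴ
            - ((1 : ℂ)/2) • ((Lop k)ᴴ * Lop k * ρ + ρ * ((Lop k)ᴴ * Lop k))))
    (ℒhat : Module.End ℂ (Matrix (Fin dE × Fin dP) (Fin dE × Fin dP) ℂ))
    (hℒhat : ∀ ρ, ℒhat ρ =
      -(Complex.I) • ((HEP + (ω : ℂ) • kron (1 : Matrix (Fin dE) (Fin dE) ℂ) G) * ρ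
          - ρ * (HEP + (ω : ℂ) • kron (1 : Matrix (Fin dE) (Fin dE) ℂ) G))
        + ∑ k, (Lop k * ρ * (Lop k)ᴴ
            - ((1 : ℂ)/2) • ((Lop k)ᴴ * Lop k * ρ + ρ * ((Lop k)ᴴ * Lop k)))) :
    ∀ (X : Fin dE → Matrix (Fin dP) (Fin dP) ℂ) (t : ℝ),
      TrE (expApply ((t : ℂ) • ℒ) (∑ i, kron (Eii i) (X i)))
        = TrE (expApply ((t : ℂ) • ℒhat) (∑ i, kron (Eii i) (X i))) := by
  intro X t
  have hEii : ∀ i : Fin dE, ∀ a b, a ≠ b → Eii i a b = 0 := by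
    intro i a b hab
    simp only [Eii, Matrix.single, Matrix.of_apply, ite_eq_right_iff, and_imp]
    rintro rfl rfl; exact absurd rfl hab
  set ρ0 := ∑ i, kron (Eii i) (X i) with hρ0def
  have hρ0d : EnvDiag ρ0 :=
    envDiag_sum _ _ fun i _ => envDiag_kron _ (hEii i)
  have hHEPd : EnvDiag HEP := by
    rw [hHEP]; exact envDiag_sum _ _ fun i _ => envDiag_kron _ (hEii i)
  have hGd : EnvDiag (kron (1 : Matrix (Fin dE) (Fin dE) ℂ) G) :=
    envDiag_kron _ fun i j hij => Matrix.one_apply_ne hij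
  have hLd : ∀ k, EnvDiag (Lop k) := by
    intro k; rw [hLop]; exact envDiag_sum _ _ fun i _ => envDiag_kron _ (hEii i)
  have hAd : EnvDiag (HEP + (ω : ℂ) • kron (1 : Matrix (Fin dE) (Fin dE) ℂ) G) :=
    hHEPd.add (hGd.smul _)
  -- ℒhat preserves env-diagonal matrices
  have hpres : ∀ ρ, EnvDiag ρ → EnvDiag (ℒhat ρ) := by
    intro ρ hρ
    rw [hℒhat]
    refine EnvDiag.add (EnvDiag.smul _ ((hAd.mul hρ).sub (hρ.mul hAd)))
      (envDiag_sum _ _ fun k _ => ?_)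
    exact (((hLd k).mul hρ).mul (hLd k).conjTranspose).sub
      (EnvDiag.smul _ ((((hLd k).conjTranspose.mul (hLd k)).mul hρ).add
        (hρ.mul ((hLd k).conjTranspose.mul (hLd k)))))
  -- ℒ agrees with ℒhat on env-diagonal matrices
  have heq : ∀ ρ, EnvDiag ρ → ℒ ρ = ℒhat ρ := by
    intro ρ hρ
    rw [hℒ, hℒhat]
    have hcomm : kron HE (1 : Matrix (Fin dP) (Fin dP) ℂ) * ρ
        = ρ * kron HE (1 : Matrix (Fin dP) (Fin dP) ℂ) := by
      rw [hHE]; exact kron_diag_comm _ hρ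
    congr 2
    simp only [add_mul, mul_add, smul_mul_assoc, mul_smul_comm, hcomm]
    abel
  -- powers agree on ρ0
  have key : ∀ n : ℕ,
      ((((t : ℂ) • ℒ) ^ n) ρ0 = (((t : ℂ) • ℒhat) ^ n) ρ0) ∧
        EnvDiag ((((t : ℂ) • ℒhat) ^ n) ρ0) := by
    intro n
    induction n with
    | zero => simpa using hρ0d
    | succ n ih =>
      obtain ⟨h1, h2⟩ := ih
      constructor
      · rw [pow_succ', pow_succ', Module.End.mul_apply, Module.End.mul_apply,
          h1, LinearMap.smul_apply, LinearMap.smul_apply, heq _ h2]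
      · rw [pow_succ', Module.End.mul_apply, LinearMap.smul_apply]
        exact EnvDiag.smul _ (hpres _ h2)
  have : expApply ((t : ℂ) • ℒ) ρ0 = expApply ((t : ℂ) • ℒhat) ρ0 := by
    unfold expApply
    exact tsum_congr fun n => by rw [(key n).1]
  rw [this]
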